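/- Let G=(V,E) be a finite loopless undirected graph, ≺ a linear order on V, and ℓ ≥ 1. Every cycle of the digraph G'(ℓ) contains, for some edge {u,v} ∈ E, both vertex arcs (u_0,u_1) and (v_0,v_1). -/

import Mathlib

/-- A digraph on vertex type `W` is given by its arc set `A ⊆ W × W`.
It is acyclic when the transitive closure of its arc relation is irreflexive
(equivalently, it has no cycle). -/
def Acyclic {W : Type*} (A : Set (W × W)) : Prop :=
  ∀ v : W, ¬ Relation.TransGen (fun u w => (u, w) ∈ A) v v

/-- `F` is a feedback arc set of the digraph with arc set `A`:
`F ⊆ A` and the digraph `(V, A \ F)` is acyclic. -/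
def IsFAS {W : Type*} (A F : Set (W × W)) : Prop :=
  F ⊆ A ∧ Acyclic (A \ F)

/-- `C` is a vertex cover of the undirected graph `G`: it meets every edge. -/
def IsVC {V : Type*} (G : SimpleGraph V) (C : Set V) : Prop :=
  ∀ u v : V, G.Adj u v → u ∈ C ∨ v ∈ C

/-- The vertices of the digraph `G'(ℓ)`: two copies `v_0, v_1` of each vertex
`v ∈ V`, and vertices `e_{i,j}` for each edge `e`, `i ∈ {0,1}`, `j ∈ [ℓ]`. -/
abbrev GPVertex (V : Type*) (ℓ : ℕ) := (V × Fin 2) ⊕ (Sym2 V × Fin 2 × Fin ℓ)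

/-- The vertex arcs `(v_0, v_1)` of `G'(ℓ)`. -/
def vertexArcs (V : Type*) (ℓ : ℕ) : Set (GPVertex V ℓ × GPVertex V ℓ) :=
  { p | ∃ v : V, p = (Sum.inl (v, 0), Sum.inl (v, 1)) }

/-- The edge arcs of `G'(ℓ)`: for each edge `{u,v}` of `G` with `u ≺ v` and each
`j ∈ [ℓ]`, the four arcs `(u_1, e_{0,j})`, `(e_{0,j}, v_0)`, `(v_1, e_{1,j})`,
`(e_{1,j}, u_0)`. -/
def edgeArcs {V : Type*} [LinearOrder V] (G : SimpleGraph V) (ℓ : ℕ) :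
    Set (GPVertex V ℓ × GPVertex V ℓ) :=
  { p | ∃ u v : V, G.Adj u v ∧ u < v ∧ ∃ j : Fin ℓ,
      p = (Sum.inl (u, 1), Sum.inr (s(u, v), 0, j)) ∨
      p = (Sum.inr (s(u, v), 0, j), Sum.inl (v, 0)) ∨
      p = (Sum.inl (v, 1), Sum.inr (s(u, v), 1, j)) ∨
      p = (Sum.inr (s(u, v), 1, j), Sum.inl (u, 0)) }

/-- The arc set of the digraph `G'(ℓ)`. -/
def GPArcs {V : Type*} [LinearOrder V] (G : SimpleGraph V) (ℓ : ℕ) :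
    Set (GPVertex V ℓ × GPVertex V ℓ) :=
  vertexArcs V ℓ ∪ edgeArcs G ℓ

/-- A cycle of a digraph with arc set `A`: a nonempty list of arcs of `A`, each
arc's head being the next arc's tail, and the last arc's head being the first
arc's tail. -/
def IsCycle {W : Type*} (A : Set (W × W)) (c : List (W × W)) : Prop :=
  c ≠ [] ∧ (∀ a ∈ c, a ∈ A) ∧ c.Chain' (fun a b => a.2 = b.1) ∧
    ∀ a b : W × W, c.head? = some a → c.getLast? = some b → b.2 = a.1

section Aux

variable {W : Type*}

lemma cyc_next {A : Set (W × W)} {c : List (W × W)} (hc : IsCycle A c) :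
    ∀ a ∈ c, ∃ b ∈ c, a.2 = b.1 := by
  obtain ⟨hne, -, hchain, hclose⟩ := hc
  have hlen : 0 < c.length := List.length_pos_iff.mpr hne
  have hhead : c.head? = some (c.get ⟨0, hlen⟩) := by
    rw [List.head?_eq_head hne, List.head_eq_getElem_zero hne]; rfl
  have hlast : c.getLast? = some (c.get ⟨c.length - 1, by omega⟩) := by
    rw [List.getLast?_eq_getLast_of_ne_nil hne, List.getLast_eq_getElem]; rfl
  intro a ha
  obtain ⟨i, rfl⟩ := List.mem_iff_get.mp ha
  by_cases h : (i : ℕ) + 1 < c.length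
  · exact ⟨c.get ⟨i + 1, h⟩, List.get_mem _ _, List.isChain_iff_getElem.mp hchain i (by omega)⟩
  · have hi : i = (⟨c.length - 1, by omega⟩ : Fin c.length) := Fin.ext (by simp only [Fin.val_mk]; have := i.isLt; omega)
    refine ⟨c.get ⟨0, hlen⟩, List.get_mem _ _, ?_⟩
    rw [hi]
    exact hclose _ _ hhead hlast

lemma cyc_prev {A : Set (W × W)} {c : List (W × W)} (hc : IsCycle A c) :
    ∀ a ∈ c, ∃ b ∈ c, b.2 = a.1 := by
  obtain ⟨hne, -, hchain, hclose⟩ := hc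
  have hlen : 0 < c.length := List.length_pos_iff.mpr hne
  have hhead : c.head? = some (c.get ⟨0, hlen⟩) := by
    rw [List.head?_eq_head hne, List.head_eq_getElem_zero hne]; rfl
  have hlast : c.getLast? = some (c.get ⟨c.length - 1, by omega⟩) := by
    rw [List.getLast?_eq_getLast_of_ne_nil hne, List.getLast_eq_getElem]; rfl
  intro a ha
  obtain ⟨i, rfl⟩ := List.mem_iff_get.mp ha
  by_cases h : (i : ℕ) = 0
  · have hi : i = (⟨0, hlen⟩ : Fin c.length) := Fin.ext h
    refine ⟨c.get ⟨c.length - 1, by omega⟩, List.get_mem _ _, ?_⟩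
    rw [hi]
    exact hclose _ _ hhead hlast
  · have h1 : (i : ℕ) - 1 + 1 < c.length := by have := i.isLt; omega
    refine ⟨c.get ⟨(i : ℕ) - 1, by omega⟩, List.get_mem _ _, ?_⟩
    have key := List.isChain_iff_getElem.mp hchain ((i : ℕ) - 1) (by omega)
    have e : c.get ⟨(i : ℕ) - 1 + 1, h1⟩ = c.get i :=
      congrArg c.get (Fin.ext (by simp only [Fin.val_mk]; omega))
    rw [← e]
    exact key

end Aux

lemma sym2_eq_of_lt {V : Type*} [LinearOrder V] {u v u' v' : V}
    (h : s(u, v) = s(u', v')) (h1 : u < v) (h2 : u' < v') : u = u' ∧ v = v' := by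
  rw [Sym2.eq_iff] at h
  rcases h with ⟨rfl, rfl⟩ | ⟨rfl, rfl⟩
  · exact ⟨rfl, rfl⟩
  · exact absurd h2 (asymm h1)

/-- every cycle of `G'(ℓ)` contains both vertex arcs `(u_0,u_1)`
and `(v_0,v_1)` for some edge `{u,v}` of `G`. -/
theorem cycle_contains_both_vertex_arcs {V : Type*} [Fintype V] [LinearOrder V]
    (G : SimpleGraph V) (ℓ : ℕ) (hℓ : 1 ≤ ℓ)
    (c : List (GPVertex V ℓ × GPVertex V ℓ)) (hc : IsCycle (GPArcs G ℓ) c) :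
    ∃ u v : V, G.Adj u v ∧
      ((Sum.inl (u, 0) : GPVertex V ℓ), (Sum.inl (u, 1) : GPVertex V ℓ)) ∈ c ∧
      ((Sum.inl (v, 0) : GPVertex V ℓ), (Sum.inl (v, 1) : GPVertex V ℓ)) ∈ c := by
  obtain ⟨hne, hmem, hchain, hclose⟩ := hc
  have hc' : IsCycle (GPArcs G ℓ) c := ⟨hne, hmem, hchain, hclose⟩
  -- arcs whose head is `inl (u, 1)` are the vertex arc of `u`
  have claimA : ∀ a ∈ c, ∀ u : V, a.2 = Sum.inl (u, 1) →
      a = ((Sum.inl (u, 0) : GPVertex V ℓ), (Sum.inl (u, 1) : GPVertex V ℓ)) := by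
    intro a ha u hu
    have h := hmem a ha
    rw [GPArcs] at h
    rcases h with h | h
    · obtain ⟨w, rfl⟩ := h
      injection hu with h'
      injection h' with h1 h2
      subst h1
      rfl
    · obtain ⟨u', v', -, -, j, h⟩ := h
      rcases h with rfl | rfl | rfl | rfl
      · simp at hu
      · injection hu with h'
        injection h' with h1 h2
        exact absurd h2 (by decide)
      · simp at hu
      · injection hu with h'
        injection h' with h1 h2
        exact absurd h2 (by decide)
  have claimB : ∀ a ∈ c, ∀ v : V, a.1 = Sum.inl (v, 0) →
      a = ((Sum.inl (v, 0) : GPVertex V ℓ), (Sum.inl (v, 1) : GPVertex V ℓ)) := by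
    intro a ha v hv
    have h := hmem a ha
    rw [GPArcs] at h
    rcases h with h | h
    · obtain ⟨w, rfl⟩ := h
      injection hv with h'
      injection h' with h1 h2
      subst h1
      rfl
    · obtain ⟨u', v', -, -, j, h⟩ := h
      rcases h with rfl | rfl | rfl | rfl
      · injection hv with h'
        injection h' with h1 h2
        exact absurd h2 (by decide)
      · simp at hv
      · injection hv with h'
        injection h' with h1 h2
        exact absurd h2 (by decide)
      · simp at hv
  by_cases hE : ∃ a ∈ c, a ∈ edgeArcs G ℓ
  · obtain ⟨a, ha, u, v, hadj, hlt, j, hcase⟩ := hE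
    rcases hcase with rfl | rfl | rfl | rfl
    · -- a = (u_1, e_{0,j})
      obtain ⟨b, hb, hb2⟩ := cyc_prev hc' _ ha
      have hbu := claimA b hb u hb2
      obtain ⟨d, hd, hd1⟩ := cyc_next hc' _ ha
      have hdm := hmem d hd
      rw [GPArcs] at hdm
      rcases hdm with hdm | hdm
      · obtain ⟨w, rfl⟩ := hdm
        simp at hd1
      · obtain ⟨u', v', hadj', hlt', j', hcase'⟩ := hdm
        rcases hcase' with rfl | rfl | rfl | rfl
        · simp at hd1
        · injection hd1 with h'
          have hs : s(u, v) = s(u', v') := congrArg Prod.fst h'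
          obtain ⟨rfl, rfl⟩ := sym2_eq_of_lt hs hlt hlt'
          obtain ⟨f, hf, hf1⟩ := cyc_next hc' _ hd
          have hfv := claimB f hf _ hf1.symm
          exact ⟨_, _, hadj, hbu ▸ hb, hfv ▸ hf⟩
        · simp at hd1
        · injection hd1 with h'
          have h2 : (0 : Fin 2) = 1 := congrArg (fun p => p.2.1) h'
          exact absurd h2 (by decide)
    · -- a = (e_{0,j}, v_0)
      obtain ⟨d, hd, hd1⟩ := cyc_next hc' _ ha
      have hdv := claimB d hd v hd1.symm
      obtain ⟨b, hb, hb2⟩ := cyc_prev hc' _ ha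
      have hbm := hmem b hb
      rw [GPArcs] at hbm
      rcases hbm with hbm | hbm
      · obtain ⟨w, rfl⟩ := hbm
        simp at hb2
      · obtain ⟨u', v', hadj', hlt', j', hcase'⟩ := hbm
        rcases hcase' with rfl | rfl | rfl | rfl
        · injection hb2 with h'
          have hs : s(u', v') = s(u, v) := congrArg Prod.fst h'
          obtain ⟨rfl, rfl⟩ := sym2_eq_of_lt hs hlt' hlt
          obtain ⟨g, hg, hg2⟩ := cyc_prev hc' _ hb
          have hgu := claimA g hg _ hg2
          exact ⟨_, _, hadj, hgu ▸ hg, hdv ▸ hd⟩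
        · simp at hb2
        · injection hb2 with h'
          have h2 : (1 : Fin 2) = 0 := congrArg (fun p => p.2.1) h'
          exact absurd h2 (by decide)
        · simp at hb2
    · -- a = (v_1, e_{1,j})
      obtain ⟨b, hb, hb2⟩ := cyc_prev hc' _ ha
      have hbv := claimA b hb v hb2
      obtain ⟨d, hd, hd1⟩ := cyc_next hc' _ ha
      have hdm := hmem d hd
      rw [GPArcs] at hdm
      rcases hdm with hdm | hdm
      · obtain ⟨w, rfl⟩ := hdm
        simp at hd1
      · obtain ⟨u', v', hadj', hlt', j', hcase'⟩ := hdm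
        rcases hcase' with rfl | rfl | rfl | rfl
        · simp at hd1
        · injection hd1 with h'
          have h2 : (1 : Fin 2) = 0 := congrArg (fun p => p.2.1) h'
          exact absurd h2 (by decide)
        · simp at hd1
        · injection hd1 with h'
          have hs : s(u, v) = s(u', v') := congrArg Prod.fst h'
          obtain ⟨rfl, rfl⟩ := sym2_eq_of_lt hs hlt hlt'
          obtain ⟨f, hf, hf1⟩ := cyc_next hc' _ hd
          have hfu := claimB f hf _ hf1.symm
          exact ⟨_, _, hadj, hfu ▸ hf, hbv ▸ hb⟩
    · -- a = (e_{1,j}, u_0)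
      obtain ⟨d, hd, hd1⟩ := cyc_next hc' _ ha
      have hdu := claimB d hd u hd1.symm
      obtain ⟨b, hb, hb2⟩ := cyc_prev hc' _ ha
      have hbm := hmem b hb
      rw [GPArcs] at hbm
      rcases hbm with hbm | hbm
      · obtain ⟨w, rfl⟩ := hbm
        simp at hb2
      · obtain ⟨u', v', hadj', hlt', j', hcase'⟩ := hbm
        rcases hcase' with rfl | rfl | rfl | rfl
        · injection hb2 with h'
          have h2 : (0 : Fin 2) = 1 := congrArg (fun p => p.2.1) h'
          exact absurd h2 (by decide)
        · simp at hb2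
        · injection hb2 with h'
          have hs : s(u', v') = s(u, v) := congrArg Prod.fst h'
          obtain ⟨rfl, rfl⟩ := sym2_eq_of_lt hs hlt' hlt
          obtain ⟨g, hg, hg2⟩ := cyc_prev hc' _ hb
          have hgv := claimA g hg _ hg2
          exact ⟨_, _, hadj, hdu ▸ hd, hgv ▸ hg⟩
        · simp at hb2
  · -- all arcs are vertex arcs: impossible
    exfalso
    push_neg at hE
    have hh : c.head hne ∈ c := List.head_mem hne
    have hhm := hmem _ hh
    rw [GPArcs] at hhm
    rcases hhm with hhm | hhm
    · obtain ⟨w, hw⟩ := hhm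
      obtain ⟨b, hb, hb2⟩ := cyc_prev hc' _ hh
      have hbm := hmem b hb
      rw [GPArcs] at hbm
      rcases hbm with hbm | hbm
      · obtain ⟨x, rfl⟩ := hbm
        rw [hw] at hb2
        injection hb2 with h'
        injection h' with h1 h2
        exact absurd h2 (by decide)
      · exact hE b hb hbm
    · exact hE _ hh hhm
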